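/- Let H be a (k,l)-edge-maximal r-uniform hypergraph with n ≥ l ≥ t+1, k, r ≥ 2, where t is the largest integer with C(t-1,r-1) ≤ k. If X is a nonempty proper subset of V(H) with |E_H(X)| = k and r ≤ |X| ≤ l-1, then the induced subhypergraph H[X] is a complete r-uniform hypergraph and |X| ≥ t. -/

import Mathlib

/-- The set of edges of `E` crossing the cut `(X, S \ X)` inside ground set `S`. -/
def cutEdges {V : Type*} [DecidableEq V] (E : Finset (Finset V)) (S X : Finset V) :
    Finset (Finset V) :=
  E.filter fun e => (e ∩ X).Nonempty ∧ (e ∩ (S \ X)).Nonempty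

/-- `E` is the edge set of a `(k,l)`-edge-maximal `r`-uniform hypergraph on vertex set `W`:
every subhypergraph on at least `l` vertices has edge-connectivity at most `k`, and
adding any missing `r`-subset of `W` creates a subhypergraph on at least `l` vertices
with edge-connectivity at least `k + 1`. -/
def IsKLEdgeMaximal {V : Type*} [DecidableEq V] (r k l : ℕ) (W : Finset V)
    (E : Finset (Finset V)) : Prop :=
  (∀ e ∈ E, e.card = r ∧ e ⊆ W) ∧
  (∀ S ⊆ W, ∀ E' ⊆ E, (∀ e ∈ E', e ⊆ S) → l ≤ S.card →
    ∃ X ⊆ S, X.Nonempty ∧ (S \ X).Nonempty ∧ (cutEdges E' S X).card ≤ k) ∧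
  (∀ e : Finset V, e ⊆ W → e.card = r → e ∉ E →
    ∃ S ⊆ W, ∃ E' ⊆ insert e E, (∀ f ∈ E', f ⊆ S) ∧ l ≤ S.card ∧
      ∀ X ⊆ S, X.Nonempty → (S \ X).Nonempty → k + 1 ≤ (cutEdges E' S X).card)

lemma added_edge_mem {V : Type*} [DecidableEq V] {r k l : ℕ} {W : Finset V}
    {E : Finset (Finset V)} (hmax : IsKLEdgeMaximal r k l W E)
    {e : Finset V} (he : e ⊆ W) (hcard : e.card = r) (heE : e ∉ E) :
    ∃ S ⊆ W, ∃ E' ⊆ insert e E, (∀ f ∈ E', f ⊆ S) ∧ l ≤ S.card ∧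
      (∀ X ⊆ S, X.Nonempty → (S \ X).Nonempty → k + 1 ≤ (cutEdges E' S X).card) ∧ e ∈ E' := by
  obtain ⟨S, hSW, E', hE', hE'S, hScard, hconn⟩ := hmax.2.2 e he hcard heE
  refine ⟨S, hSW, E', hE', hE'S, hScard, hconn, ?_⟩
  by_contra heE'
  have hsub : E' ⊆ E := by
    intro f hf
    rcases Finset.mem_insert.mp (hE' hf) with h | h
    · exact absurd (h ▸ hf) heE'
    · exact h
  obtain ⟨Y, hYS, hYne, hYcne, hYcut⟩ := hmax.2.1 S hSW E' hsub hE'S hScard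
  exact absurd (hconn Y hYS hYne hYcne) (by omega)

/-- Edges through `u` contained in `X` are at most `C(|X|-1, r-1)`. -/
lemma deg_in_le {V : Type*} [DecidableEq V] (A : Finset (Finset V)) (X : Finset V) (u : V)
    (r : ℕ) (hcard : ∀ f ∈ A, f.card = r) (hsub : ∀ f ∈ A, f ⊆ X) (hu : ∀ f ∈ A, u ∈ f) :
    A.card ≤ (X.card - 1).choose (r - 1) := by
  rcases A.eq_empty_or_nonempty with rfl | ⟨f₀, hf₀⟩
  · simp
  have huX : u ∈ X := hsub f₀ hf₀ (hu f₀ hf₀)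
  have : A.card ≤ ((X.erase u).powersetCard (r - 1)).card := by
    apply Finset.card_le_card_of_injOn (fun f => f.erase u)
    · intro f hf
      simp only [Finset.mem_coe, Finset.mem_powersetCard]
      constructor
      · exact fun x hx => Finset.mem_erase.mpr
          ⟨(Finset.mem_erase.mp hx).1, hsub f hf (Finset.mem_of_mem_erase hx)⟩
      · rw [Finset.card_erase_of_mem (hu f hf), hcard f hf]
    · intro f hf g hg hfg
      have := congrArg (insert u) hfg
      rwa [Finset.insert_erase (hu f hf), Finset.insert_erase (hu g hg)] at this
  rwa [Finset.card_powersetCard, Finset.card_erase_of_mem huX] at this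

lemma tpos {r k t : ℕ} (hk : 2 ≤ k) (hr : 2 ≤ r) (ht2 : k < t.choose (r - 1)) : 1 ≤ t := by
  by_contra h
  push_neg at h
  interval_cases t
  rw [Nat.choose_eq_zero_of_lt (by omega)] at ht2
  omega

lemma deg_ge {n r k l t : ℕ} (hk : 2 ≤ k) (hr : 2 ≤ r)
    (ht2 : k < t.choose (r - 1)) (hl : t + 1 ≤ l) (hln : l ≤ n)
    {E : Finset (Finset (Fin n))}
    (hmax : IsKLEdgeMaximal r k l Finset.univ E) (u : Fin n) :
    k ≤ (E.filter (fun f => u ∈ f)).card := by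
  by_contra hlt
  push_neg at hlt
  set D := E.filter (fun f => u ∈ f) with hD
  -- there is a missing r-set containing u
  have hex : ∃ g ∈ ((Finset.univ : Finset (Fin n)).erase u).powersetCard (r - 1),
      insert u g ∉ E := by
    by_contra hall
    push_neg at hall
    have hle : (((Finset.univ : Finset (Fin n)).erase u).powersetCard (r - 1)).card
        ≤ D.card := by
      apply Finset.card_le_card_of_injOn (fun g => insert u g)
      · intro g hg
        rw [Finset.mem_coe, Finset.mem_filter]
        exact ⟨hall g hg, Finset.mem_insert_self u g⟩
      · intro g hg g' hg' hgg'
        have hug : u ∉ g := fun h =>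
          (Finset.mem_erase.mp ((Finset.mem_powersetCard.mp hg).1 h)).1 rfl
        have hug' : u ∉ g' := fun h =>
          (Finset.mem_erase.mp ((Finset.mem_powersetCard.mp hg').1 h)).1 rfl
        have := congrArg (fun s => Finset.erase s u) hgg'
        simpa [Finset.erase_insert hug, Finset.erase_insert hug'] using this
    rw [Finset.card_powersetCard, Finset.card_erase_of_mem (Finset.mem_univ u),
      Finset.card_univ, Fintype.card_fin] at hle
    have h1 : t.choose (r - 1) ≤ (n - 1).choose (r - 1) :=
      Nat.choose_le_choose _ (by omega)
    omega
  obtain ⟨g, hg, hgE⟩ := hex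
  rw [Finset.mem_powersetCard] at hg
  have hug : u ∉ g := fun h => (Finset.mem_erase.mp (hg.1 h)).1 rfl
  have hcard : (insert u g).card = r := by
    rw [Finset.card_insert_of_notMem hug, hg.2]; omega
  obtain ⟨S, hSW, E', hE', hE'S, hScard, hconn, heE'⟩ :=
    added_edge_mem hmax (Finset.subset_univ _) hcard hgE
  have huS : u ∈ S := hE'S _ heE' (Finset.mem_insert_self u g)
  have ht1 : 1 ≤ t := tpos hk hr ht2
  have hne : (S \ {u}).Nonempty := by
    rw [← Finset.card_pos]
    have : ({u} : Finset (Fin n)) ⊆ S := Finset.singleton_subset_iff.mpr huS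
    have := Finset.card_sdiff_of_subset this
    simp only [Finset.card_singleton] at this
    omega
  have hcut := hconn {u} (Finset.singleton_subset_iff.mpr huS)
    ⟨u, Finset.mem_singleton_self u⟩ hne
  have hsub : cutEdges E' S {u} ⊆ insert (insert u g) D := by
    intro f hf
    rw [cutEdges, Finset.mem_filter] at hf
    obtain ⟨hfE', ⟨x, hx⟩, -⟩ := hf
    rw [Finset.mem_inter, Finset.mem_singleton] at hx
    rcases Finset.mem_insert.mp (hE' hfE') with h | h
    · exact Finset.mem_insert.mpr (Or.inl h)
    · exact Finset.mem_insert.mpr (Or.inr (Finset.mem_filter.mpr ⟨h, hx.2 ▸ hx.1⟩))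
  have := Finset.card_le_card hsub
  have := Finset.card_insert_le (insert u g) D
  omega

lemma complete_part {n r k l : ℕ} (hr : 2 ≤ r) {E : Finset (Finset (Fin n))}
    (hmax : IsKLEdgeMaximal r k l Finset.univ E)
    {X : Finset (Fin n)} (hcut : (cutEdges E Finset.univ X).card = k)
    (hX2 : X.card ≤ l - 1) (hl1 : 1 ≤ l) :
    ∀ e : Finset (Fin n), e.card = r → e ⊆ X → e ∈ E := by
  intro e hecard heX
  by_contra heE
  obtain ⟨S, hSW, E', hE', hE'S, hScard, hconn, heE'⟩ :=
    added_edge_mem hmax (Finset.subset_univ _) hecard heE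
  have heS : e ⊆ S := hE'S _ heE'
  have hene : e.Nonempty := Finset.card_pos.mp (by omega)
  have hAne : (X ∩ S).Nonempty := by
    obtain ⟨x, hx⟩ := hene
    exact ⟨x, Finset.mem_inter.mpr ⟨heX hx, heS hx⟩⟩
  have hSA : (S \ (X ∩ S)).Nonempty := by
    rw [← Finset.card_pos]
    have h1 := Finset.card_sdiff_of_subset (Finset.inter_subset_right (s₁ := X) (s₂ := S))
    have h2 : (X ∩ S).card ≤ X.card := Finset.card_le_card Finset.inter_subset_left
    omega
  have hcutA := hconn (X ∩ S) Finset.inter_subset_right hAne hSA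
  have hsub : cutEdges E' S (X ∩ S) ⊆ cutEdges E Finset.univ X := by
    intro f hf
    rw [cutEdges, Finset.mem_filter] at hf
    obtain ⟨hfE', ⟨x, hx⟩, ⟨y, hy⟩⟩ := hf
    rw [Finset.mem_inter] at hx hy
    have hyS := Finset.mem_sdiff.mp hy.2
    have hyX : y ∉ X := fun h => hyS.2 (Finset.mem_inter.mpr ⟨h, hyS.1⟩)
    have hfE : f ∈ E := by
      rcases Finset.mem_insert.mp (hE' hfE') with h | h
      · exact absurd (heX (h ▸ hy.1)) hyX
      · exact h
    rw [cutEdges, Finset.mem_filter]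
    exact ⟨hfE, ⟨x, Finset.mem_inter.mpr ⟨hx.1, (Finset.mem_inter.mp hx.2).1⟩⟩,
      ⟨y, Finset.mem_inter.mpr ⟨hy.1, Finset.mem_sdiff.mpr ⟨Finset.mem_univ y, hyX⟩⟩⟩⟩
  have := Finset.card_le_card hsub
  omega

set_option maxHeartbeats 2000000 in
theorem stmt_14 (n k l r t : ℕ) (hk : 2 ≤ k) (hr : 2 ≤ r)
    (ht1 : (t - 1).choose (r - 1) ≤ k) (ht2 : k < t.choose (r - 1))
    (hl : t + 1 ≤ l) (hln : l ≤ n)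
    (E : Finset (Finset (Fin n)))
    (hmax : IsKLEdgeMaximal r k l Finset.univ E)
    (X : Finset (Fin n)) (hXne : X.Nonempty) (hXprop : X ≠ Finset.univ)
    (hcut : (cutEdges E Finset.univ X).card = k)
    (hX1 : r ≤ X.card) (hX2 : X.card ≤ l - 1) :
    (∀ e : Finset (Fin n), e.card = r → e ⊆ X → e ∈ E) ∧ t ≤ X.card := by
  have htpos : 1 ≤ t := tpos hk hr ht2
  have hcomp := complete_part hr hmax hcut hX2 (by omega)
  refine ⟨hcomp, ?_⟩
  set m := X.card with hm
  by_contra hmt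
  push_neg at hmt
  -- so r ≤ m ≤ t - 1
  have hrm : r ≤ m := hX1
  have hrt : r + 1 ≤ t := by omega
  -- pick u ∈ X, v ∉ X
  obtain ⟨u, huX⟩ := hXne
  have hvex : ∃ v, v ∉ X := by
    by_contra hall
    push_neg at hall
    exact hXprop (Finset.eq_univ_iff_forall.mpr hall)
  obtain ⟨v, hvX⟩ := hvex
  have huv : u ≠ v := fun h => hvX (h ▸ huX)
  -- the set of crossing r-sets
  set Cross := ((Finset.univ : Finset (Fin n)).powersetCard r).filter
    (fun e => (e ∩ X).Nonempty ∧ (e ∩ (Finset.univ \ X)).Nonempty) with hCross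
  -- count crossing r-sets
  have hkCross : k < Cross.card := by
    set P := (Finset.univ : Finset (Fin n)) \ {u, v} with hP
    have hPcard : P.card = n - 2 := by
      rw [hP, Finset.card_sdiff_of_subset (Finset.subset_univ _), Finset.card_univ, Fintype.card_fin,
        Finset.card_insert_of_notMem (by simpa using huv), Finset.card_singleton]
    have huP : u ∉ P := by simp [hP]
    have hvP : v ∉ P := by simp [hP]
    set f1 : Finset (Fin n) → Finset (Fin n) :=
      fun g => if (g ∩ X).Nonempty then insert v g else insert u g with hf1
    set I1 := (P.powersetCard (r - 1)).image f1 with hI1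
    set I2 := (P.powersetCard (r - 2)).image (fun g => insert u (insert v g)) with hI2
    have hmemP : ∀ {g : Finset (Fin n)}, g ⊆ P → u ∉ g ∧ v ∉ g := by
      intro g hg
      exact ⟨fun h => huP (hg h), fun h => hvP (hg h)⟩
    have hI1card : I1.card = (n - 2).choose (r - 1) := by
      rw [hI1, Finset.card_image_of_injOn, Finset.card_powersetCard, hPcard]
      intro g hg g' hg' hgg'
      obtain ⟨hgu, hgv⟩ := hmemP (Finset.mem_powersetCard.mp (Finset.mem_coe.mp hg)).1
      obtain ⟨hgu', hgv'⟩ := hmemP (Finset.mem_powersetCard.mp (Finset.mem_coe.mp hg')).1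
      rw [hf1] at hgg'
      by_cases h : (g ∩ X).Nonempty <;> by_cases h' : (g' ∩ X).Nonempty <;>
        simp only [h, h', if_pos, if_neg, if_true, if_false] at hgg'
      · have := congrArg (fun s => Finset.erase s v) hgg'
        simpa [Finset.erase_insert hgv, Finset.erase_insert hgv'] using this
      · exfalso
        have : v ∈ insert u g' := hgg' ▸ Finset.mem_insert_self v g
        rcases Finset.mem_insert.mp this with h1 | h1
        · exact huv h1.symm
        · exact hgv' h1
      · exfalso
        have : v ∈ insert u g := hgg'.symm ▸ Finset.mem_insert_self v g'
        rcases Finset.mem_insert.mp this with h1 | h1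
        · exact huv h1.symm
        · exact hgv h1
      · have := congrArg (fun s => Finset.erase s u) hgg'
        simpa [Finset.erase_insert hgu, Finset.erase_insert hgu'] using this
    have hI2card : I2.card = (n - 2).choose (r - 2) := by
      rw [hI2, Finset.card_image_of_injOn, Finset.card_powersetCard, hPcard]
      intro g hg g' hg' hgg'
      obtain ⟨hgu, hgv⟩ := hmemP (Finset.mem_powersetCard.mp (Finset.mem_coe.mp hg)).1
      obtain ⟨hgu', hgv'⟩ := hmemP (Finset.mem_powersetCard.mp (Finset.mem_coe.mp hg')).1
      have h1 := congrArg (fun s => Finset.erase s u) hgg'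
      simp only [Finset.erase_insert (by simp [hgu, huv] : u ∉ insert v g),
        Finset.erase_insert (by simp [hgu', huv] : u ∉ insert v g')] at h1
      have h2 := congrArg (fun s => Finset.erase s v) h1
      simpa [Finset.erase_insert hgv, Finset.erase_insert hgv'] using h2
    have hI1sub : I1 ⊆ Cross := by
      intro e he
      obtain ⟨g, hg, rfl⟩ := Finset.mem_image.mp he
      obtain ⟨hgP, hgcard⟩ := Finset.mem_powersetCard.mp hg
      obtain ⟨hgu, hgv⟩ := hmemP hgP
      have hgne : g.Nonempty := Finset.card_pos.mp (by omega)
      rw [hCross, Finset.mem_filter, Finset.mem_powersetCard, hf1]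
      by_cases h : (g ∩ X).Nonempty <;>
        simp only [h, if_pos, if_neg, if_true, if_false]
      · obtain ⟨x, hx⟩ := h
        rw [Finset.mem_inter] at hx
        refine ⟨⟨Finset.subset_univ _, ?_⟩, ⟨x, ?_⟩, ⟨v, ?_⟩⟩
        · rw [Finset.card_insert_of_notMem hgv]; omega
        · exact Finset.mem_inter.mpr ⟨Finset.mem_insert_of_mem hx.1, hx.2⟩
        · exact Finset.mem_inter.mpr ⟨Finset.mem_insert_self v g,
            Finset.mem_sdiff.mpr ⟨Finset.mem_univ v, hvX⟩⟩
      · obtain ⟨x, hx⟩ := hgne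
        have hxX : x ∉ X := fun hxX => h ⟨x, Finset.mem_inter.mpr ⟨hx, hxX⟩⟩
        refine ⟨⟨Finset.subset_univ _, ?_⟩, ⟨u, ?_⟩, ⟨x, ?_⟩⟩
        · rw [Finset.card_insert_of_notMem hgu]; omega
        · exact Finset.mem_inter.mpr ⟨Finset.mem_insert_self u g, huX⟩
        · exact Finset.mem_inter.mpr ⟨Finset.mem_insert_of_mem hx,
            Finset.mem_sdiff.mpr ⟨Finset.mem_univ x, hxX⟩⟩
    have hI2sub : I2 ⊆ Cross := by
      intro e he
      obtain ⟨g, hg, rfl⟩ := Finset.mem_image.mp he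
      obtain ⟨hgP, hgcard⟩ := Finset.mem_powersetCard.mp hg
      obtain ⟨hgu, hgv⟩ := hmemP hgP
      rw [hCross, Finset.mem_filter, Finset.mem_powersetCard]
      refine ⟨⟨Finset.subset_univ _, ?_⟩, ⟨u, ?_⟩, ⟨v, ?_⟩⟩
      · rw [Finset.card_insert_of_notMem (by simp [hgu, huv]),
          Finset.card_insert_of_notMem hgv]
        omega
      · exact Finset.mem_inter.mpr ⟨Finset.mem_insert_self u _, huX⟩
      · exact Finset.mem_inter.mpr ⟨Finset.mem_insert_of_mem (Finset.mem_insert_self v g),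
          Finset.mem_sdiff.mpr ⟨Finset.mem_univ v, hvX⟩⟩
    have hdisj : Disjoint I1 I2 := by
      rw [Finset.disjoint_left]
      intro e he1 he2
      obtain ⟨g, hg, rfl⟩ := Finset.mem_image.mp he1
      obtain ⟨g', hg', he⟩ := Finset.mem_image.mp he2
      obtain ⟨hgu, hgv⟩ := hmemP (Finset.mem_powersetCard.mp hg).1
      rw [hf1] at he
      by_cases h : (g ∩ X).Nonempty <;> simp only [h, if_pos, if_neg, if_true, if_false] at he
      · have : u ∈ insert v g := he ▸ Finset.mem_insert_self u _
        rcases Finset.mem_insert.mp this with h1 | h1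
        · exact huv h1
        · exact hgu h1
      · have : v ∈ insert u g := he ▸ Finset.mem_insert_of_mem (Finset.mem_insert_self v g')
        rcases Finset.mem_insert.mp this with h1 | h1
        · exact huv h1.symm
        · exact hgv h1
    have hunion : (I1 ∪ I2).card = (n - 2).choose (r - 1) + (n - 2).choose (r - 2) := by
      rw [Finset.card_union_of_disjoint hdisj, hI1card, hI2card]
    have hle : I1 ∪ I2 ⊆ Cross := Finset.union_subset hI1sub hI2sub
    have h1 := Finset.card_le_card hle
    have hpascal : (n - 1).choose (r - 1) = (n - 2).choose (r - 2) + (n - 2).choose (r - 1) := by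
      have h := Nat.choose_succ_succ (n - 2) (r - 2)
      simp only [Nat.succ_eq_add_one] at h
      have e1 : n - 2 + 1 = n - 1 := by omega
      have e2 : r - 2 + 1 = r - 1 := by omega
      rw [e1, e2] at h
      exact h
    have h2 : t.choose (r - 1) ≤ (n - 1).choose (r - 1) := Nat.choose_le_choose _ (by omega)
    omega
  -- there is a crossing r-set not in E
  have hex : ∃ e₀ ∈ Cross, e₀ ∉ E := by
    by_contra hall
    push_neg at hall
    have : Cross ⊆ cutEdges E Finset.univ X := by
      intro e he
      have heE := hall e he
      rw [hCross, Finset.mem_filter] at he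
      rw [cutEdges, Finset.mem_filter]
      exact ⟨heE, he.2⟩
    have := Finset.card_le_card this
    omega
  obtain ⟨e₀, he₀Cross, he₀E⟩ := hex
  rw [hCross, Finset.mem_filter, Finset.mem_powersetCard] at he₀Cross
  obtain ⟨⟨-, he₀card⟩, he₀X, he₀X'⟩ := he₀Cross
  obtain ⟨S, hSW, E', hE', hE'S, hScard, hconn, he₀E'⟩ :=
    added_edge_mem hmax (Finset.subset_univ _) he₀card he₀E
  have he₀S : e₀ ⊆ S := hE'S _ he₀E'
  have hE'card : ∀ f ∈ E', f.card = r := by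
    intro f hf
    rcases Finset.mem_insert.mp (hE' hf) with h | h
    · exact h ▸ he₀card
    · exact (hmax.1 f h).1
  set A := X ∩ S with hA
  have hAne : A.Nonempty := by
    obtain ⟨x, hx⟩ := he₀X
    rw [Finset.mem_inter] at hx
    exact ⟨x, Finset.mem_inter.mpr ⟨hx.2, he₀S hx.1⟩⟩
  have hSA : (S \ A).Nonempty := by
    rw [← Finset.card_pos]
    have h1 := Finset.card_sdiff_of_subset (show A ⊆ S from Finset.inter_subset_right)
    have h2 : A.card ≤ X.card := Finset.card_le_card Finset.inter_subset_left
    omega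
  have hcutA := hconn A Finset.inter_subset_right hAne hSA
  -- the cut of A in (S, E') is exactly insert e₀ (cutEdges E univ X)
  have hsub : cutEdges E' S A ⊆ insert e₀ (cutEdges E Finset.univ X) := by
    intro f hf
    rw [cutEdges, Finset.mem_filter] at hf
    obtain ⟨hfE', ⟨x, hx⟩, ⟨y, hy⟩⟩ := hf
    rw [Finset.mem_inter] at hx hy
    have hyS := Finset.mem_sdiff.mp hy.2
    have hyX : y ∉ X := fun h => hyS.2 (Finset.mem_inter.mpr ⟨h, hyS.1⟩)
    rcases Finset.mem_insert.mp (hE' hfE') with h | h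
    · exact Finset.mem_insert.mpr (Or.inl h)
    · refine Finset.mem_insert.mpr (Or.inr ?_)
      rw [cutEdges, Finset.mem_filter]
      exact ⟨h, ⟨x, Finset.mem_inter.mpr ⟨hx.1, (Finset.mem_inter.mp hx.2).1⟩⟩,
        ⟨y, Finset.mem_inter.mpr ⟨hy.1, Finset.mem_sdiff.mpr ⟨Finset.mem_univ y, hyX⟩⟩⟩⟩
  have he₀notcut : e₀ ∉ cutEdges E Finset.univ X := by
    rw [cutEdges, Finset.mem_filter]
    exact fun h => he₀E h.1
  have hinscard : (insert e₀ (cutEdges E Finset.univ X)).card = k + 1 := by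
    rw [Finset.card_insert_of_notMem he₀notcut, hcut]
  have hFeq : cutEdges E' S A = insert e₀ (cutEdges E Finset.univ X) :=
    Finset.eq_of_subset_of_card_le hsub (by omega)
  have hcrossS : ∀ f ∈ cutEdges E Finset.univ X, f ∈ E' ∧ f ⊆ S := by
    intro f hf
    have : f ∈ cutEdges E' S A := hFeq ▸ Finset.mem_insert_of_mem hf
    rw [cutEdges, Finset.mem_filter] at this
    exact ⟨this.1, hE'S f this.1⟩
  -- X ⊆ S
  have hXS : X ⊆ S := by
    intro u' hu'
    by_contra hu'S
    have hdeg := deg_ge hk hr ht2 hl hln hmax u'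
    have hdin : (E.filter (fun f => u' ∈ f)).card ≤ (X.card - 1).choose (r - 1) := by
      apply deg_in_le _ _ u' r
      · intro f hf
        exact (hmax.1 f (Finset.mem_filter.mp hf).1).1
      · intro f hf
        obtain ⟨hfE, hu'f⟩ := Finset.mem_filter.mp hf
        intro x hx
        by_contra hxX
        have : f ∈ cutEdges E Finset.univ X := by
          rw [cutEdges, Finset.mem_filter]
          exact ⟨hfE, ⟨u', Finset.mem_inter.mpr ⟨hu'f, hu'⟩⟩,
            ⟨x, Finset.mem_inter.mpr ⟨hx, Finset.mem_sdiff.mpr ⟨Finset.mem_univ x, hxX⟩⟩⟩⟩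
        exact hu'S ((hcrossS f this).2 hu'f)
      · exact fun f hf => (Finset.mem_filter.mp hf).2
    have hmono : (X.card - 1).choose (r - 1) ≤ (t - 2).choose (r - 1) :=
      Nat.choose_le_choose _ (by omega)
    have hstrict : (t - 2).choose (r - 1) < (t - 1).choose (r - 1) := by
      have h := Nat.choose_succ_succ (t - 2) (r - 2)
      simp only [Nat.succ_eq_add_one] at h
      have e1 : t - 2 + 1 = t - 1 := by omega
      have e2 : r - 2 + 1 = r - 1 := by omega
      rw [e1, e2] at h
      have hpos : 0 < (t - 2).choose (r - 2) := Nat.choose_pos (by omega)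
      omega
    omega
  -- per-vertex degree bound and summation
  set F := cutEdges E' S A with hF
  have hFcard : F.card = k + 1 := by rw [hFeq]; exact hinscard
  have hperv : ∀ u' ∈ X,
      k + 1 ≤ (X.card - 1).choose (r - 1) + (F.filter (fun f => u' ∈ f)).card := by
    intro u' hu'
    have hu'S : u' ∈ S := hXS hu'
    have hne : (S \ {u'}).Nonempty := by
      rw [← Finset.card_pos]
      have h1 := Finset.card_sdiff_of_subset (Finset.singleton_subset_iff.mpr hu'S)
      rw [Finset.card_singleton] at h1
      omega
    have hcutu := hconn {u'} (Finset.singleton_subset_iff.mpr hu'S)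
      ⟨u', Finset.mem_singleton_self u'⟩ hne
    have hsub1 : cutEdges E' S {u'} ⊆
        (E'.filter (fun f => u' ∈ f ∧ f ⊆ X)) ∪ (F.filter (fun f => u' ∈ f)) := by
      intro f hf
      rw [cutEdges, Finset.mem_filter] at hf
      obtain ⟨hfE', ⟨x, hx⟩, -⟩ := hf
      rw [Finset.mem_inter, Finset.mem_singleton] at hx
      have hu'f : u' ∈ f := hx.2 ▸ hx.1
      by_cases hfX : f ⊆ X
      · exact Finset.mem_union_left _ (Finset.mem_filter.mpr ⟨hfE', hu'f, hfX⟩)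
      · refine Finset.mem_union_right _ (Finset.mem_filter.mpr ⟨?_, hu'f⟩)
        obtain ⟨y, hyf, hyX⟩ := Finset.not_subset.mp hfX
        rw [hF, cutEdges, Finset.mem_filter]
        refine ⟨hfE', ⟨u', Finset.mem_inter.mpr ⟨hu'f,
          Finset.mem_inter.mpr ⟨hu', hu'S⟩⟩⟩, ⟨y, Finset.mem_inter.mpr ⟨hyf, ?_⟩⟩⟩
        refine Finset.mem_sdiff.mpr ⟨hE'S f hfE' hyf, fun h => hyX (Finset.mem_inter.mp h).1⟩
    have h1 := Finset.card_le_card hsub1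
    have h2 := Finset.card_union_le (E'.filter (fun f => u' ∈ f ∧ f ⊆ X))
      (F.filter (fun f => u' ∈ f))
    have h3 : (E'.filter (fun f => u' ∈ f ∧ f ⊆ X)).card ≤ (X.card - 1).choose (r - 1) := by
      apply deg_in_le _ _ u' r
      · exact fun f hf => hE'card f (Finset.mem_filter.mp hf).1
      · exact fun f hf => (Finset.mem_filter.mp hf).2.2
      · exact fun f hf => (Finset.mem_filter.mp hf).2.1
    omega
  -- sum over u' ∈ X
  have hsum : m * (k + 1) ≤
      m * (X.card - 1).choose (r - 1) + ∑ f ∈ F, (X.filter (fun x => x ∈ f)).card := by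
    have hswap : ∑ u' ∈ X, (F.filter (fun f => u' ∈ f)).card
        = ∑ f ∈ F, (X.filter (fun x => x ∈ f)).card := by
      simp only [Finset.card_filter]
      exact Finset.sum_comm
    calc m * (k + 1) = ∑ _u' ∈ X, (k + 1) := by rw [Finset.sum_const, smul_eq_mul, hm]
    _ ≤ ∑ u' ∈ X, ((X.card - 1).choose (r - 1) + (F.filter (fun f => u' ∈ f)).card) :=
        Finset.sum_le_sum hperv
    _ = m * (X.card - 1).choose (r - 1) + ∑ u' ∈ X, (F.filter (fun f => u' ∈ f)).card := by
        rw [Finset.sum_add_distrib, Finset.sum_const, smul_eq_mul, hm]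
    _ = _ := by rw [hswap]
  have hbound : ∑ f ∈ F, (X.filter (fun x => x ∈ f)).card ≤ (k + 1) * (r - 1) := by
    calc ∑ f ∈ F, (X.filter (fun x => x ∈ f)).card ≤ ∑ _f ∈ F, (r - 1) := by
          apply Finset.sum_le_sum
          intro f hf
          have hfF := hf
          rw [hF, cutEdges, Finset.mem_filter] at hfF
          obtain ⟨hfE', -, ⟨w, hw⟩⟩ := hfF
          rw [Finset.mem_inter] at hw
          have hwS := Finset.mem_sdiff.mp hw.2
          have hwX : w ∉ X := fun h => hwS.2 (Finset.mem_inter.mpr ⟨h, hwS.1⟩)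
          have hsubw : X.filter (fun x => x ∈ f) ⊆ f.erase w := by
            intro x hx
            obtain ⟨hxX, hxf⟩ := Finset.mem_filter.mp hx
            exact Finset.mem_erase.mpr ⟨fun h => hwX (h ▸ hxX), hxf⟩
          have := Finset.card_le_card hsubw
          rw [Finset.card_erase_of_mem hw.1, hE'card f hfE'] at this
          exact this
    _ = (k + 1) * (r - 1) := by rw [Finset.sum_const, smul_eq_mul, hFcard]
  -- final arithmetic
  have hkey : m * (k + 1) ≤ m * (m - 1).choose (r - 1) + (k + 1) * (r - 1) := by
    rw [hm] at hsum ⊢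
    omega
  have hid1 : m * (m - 1).choose (r - 1) = m.choose r * r := by
    have h := Nat.add_one_mul_choose_eq (m - 1) (r - 1)
    have e1 : (m - 1).succ = m := by omega
    have e2 : m - 1 + 1 = m := by omega
    have e3 : r - 1 + 1 = r := by omega
    rw [e2, e3] at h
    exact h
  have hid2 : m.choose r * r = m.choose (r - 1) * (m - (r - 1)) := by
    have h := Nat.choose_succ_right_eq m (r - 1)
    have e3 : r - 1 + 1 = r := by omega
    rw [e3] at h
    exact h
  have hCk : m.choose (r - 1) ≤ k :=
    le_trans (Nat.choose_le_choose _ (by omega : m ≤ t - 1)) ht1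
  rw [hid1, hid2] at hkey
  -- m * (k+1) ≤ C * (m - (r-1)) + (k+1)*(r-1), with C ≤ k, m ≥ r : contradiction
  set a := m - (r - 1) with ha
  have hage : 1 ≤ a := by omega
  have hma : m = a + (r - 1) := by omega
  have hkey2 : (a + (r - 1)) * (k + 1) ≤ k * a + (k + 1) * (r - 1) := by
    calc (a + (r - 1)) * (k + 1) = m * (k + 1) := by rw [← hma]
    _ ≤ m.choose (r - 1) * a + (k + 1) * (r - 1) := hkey
    _ ≤ k * a + (k + 1) * (r - 1) := by
        have : m.choose (r - 1) * a ≤ k * a := Nat.mul_le_mul_right a hCk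
        omega
  nlinarith [hkey2, hage]
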